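/- Let A be a self-adjoint bounded operator, Y a positive contraction (0 ≤ Y ≤ 1) on Hilbert space H, α ∈ H, and for z = (z₁, z₂) ∈ Π² set z_Y = z₁Y + z₂(1-Y). Then Im z_Y ≥ min(Im z₁, Im z₂)·I > 0, A - z_Y is invertible, and the function h(z₁,z₂) = ⟨(A - z_Y)⁻¹ α, α⟩ maps Π² into the closed upper half plane. -/

import Mathlib

open Complex

lemma selfadj_inner_real {H : Type*} [NormedAddCommGroup H] [InnerProductSpace ℂ H]
    [CompleteSpace H] {T : H →L[ℂ] H} (hT : IsSelfAdjoint T) (v : H) :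
    ((inner ℂ v (T v) : ℂ)).im = 0 := by
  have h1 : (inner ℂ (T v) v : ℂ) = inner ℂ v (T v) := by
    conv_lhs => rw [← hT.adjoint_eq]
    exact ContinuousLinearMap.adjoint_inner_left T v v
  have h2 : (starRingEnd ℂ) (inner ℂ v (T v) : ℂ) = inner ℂ (T v) v := inner_conj_symm _ _
  rw [h1] at h2
  have := congrArg Complex.im h2
  rw [Complex.conj_im] at this
  linarith

/-- Type I Nevanlinna representations give two-variable Pick functions: for `A`
self-adjoint, `Y` a positive contraction, `z = (z₁,z₂) ∈ Π²` and
`z_Y = z₁Y + z₂(1-Y)`, the imaginary part of the quadratic form of `z_Y` is bounded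
below by `min(Im z₁, Im z₂)‖v‖²`, `A - z_Y` is invertible, and
`h(z) = ⟨(A - z_Y)⁻¹α, α⟩` has nonnegative imaginary part. -/
theorem stmt_11 {H : Type*} [NormedAddCommGroup H] [InnerProductSpace ℂ H] [CompleteSpace H]
    (A Y : H →L[ℂ] H) (hA : IsSelfAdjoint A)
    (hY₀ : Y.IsPositive) (hY₁ : ((1 : H →L[ℂ] H) - Y).IsPositive)
    (α : H) (z₁ z₂ : ℂ) (hz₁ : 0 < z₁.im) (hz₂ : 0 < z₂.im) :
    (∀ v : H, min z₁.im z₂.im * ‖v‖ ^ 2 ≤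
        ((inner ℂ v ((z₁ • Y + z₂ • ((1 : H →L[ℂ] H) - Y)) v) : ℂ)).im) ∧
    IsUnit (A - (z₁ • Y + z₂ • ((1 : H →L[ℂ] H) - Y))) ∧
    0 ≤ ((inner ℂ α ((Ring.inverse (A - (z₁ • Y + z₂ • ((1 : H →L[ℂ] H) - Y)))) α) : ℂ)).im := by
  set S : H →L[ℂ] H := z₁ • Y + z₂ • ((1 : H →L[ℂ] H) - Y) with hS
  set T : H →L[ℂ] H := A - S with hT
  set m : ℝ := min z₁.im z₂.im with hm
  have hm0 : 0 < m := lt_min hz₁ hz₂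
  -- Part 1
  have key : ∀ v : H, m * ‖v‖ ^ 2 ≤ ((inner ℂ v (S v) : ℂ)).im := by
    intro v
    have hSv : (inner ℂ v (S v) : ℂ)
        = z₁ * inner ℂ v (Y v) + z₂ * inner ℂ v (((1 : H →L[ℂ] H) - Y) v) := by
      simp [hS, inner_add_right, inner_smul_right]
    set a : ℂ := inner ℂ v (Y v) with ha
    set b : ℂ := inner ℂ v (((1 : H →L[ℂ] H) - Y) v) with hb
    have haim : a.im = 0 := selfadj_inner_real hY₀.isSelfAdjoint v
    have hbim : b.im = 0 := selfadj_inner_real hY₁.isSelfAdjoint v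
    have hare : 0 ≤ a.re := by
      have := hY₀.inner_nonneg_right v
      exact (Complex.nonneg_iff.mp this).1
    have hbre : 0 ≤ b.re := by
      have := hY₁.inner_nonneg_right v
      exact (Complex.nonneg_iff.mp this).1
    have hsum : a + b = (‖v‖ : ℂ) ^ 2 := by
      have : a + b = (inner ℂ v v : ℂ) := by
        rw [ha, hb, ← inner_add_right]
        congr 1
        simp
      rw [this, inner_self_eq_norm_sq_to_K]
      norm_cast
    have hsumre : a.re + b.re = ‖v‖ ^ 2 := by
      have := congrArg Complex.re hsum
      norm_cast at this
    rw [hSv]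
    have him : (z₁ * a + z₂ * b).im = z₁.im * a.re + z₂.im * b.re := by
      simp [Complex.add_im, Complex.mul_im, haim, hbim]
    rw [him, ← hsumre]
    have h1 : m ≤ z₁.im := min_le_left _ _
    have h2 : m ≤ z₂.im := min_le_right _ _
    nlinarith
  refine ⟨key, ?_⟩
  -- quadratic form of T
  have hquad : ∀ v : H, ((inner ℂ v (T v) : ℂ)).im ≤ -(m * ‖v‖ ^ 2) := by
    intro v
    have hTv : (inner ℂ v (T v) : ℂ) = inner ℂ v (A v) - inner ℂ v (S v) := by
      simp [hT, inner_sub_right]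
    have hAim : ((inner ℂ v (A v) : ℂ)).im = 0 := selfadj_inner_real hA v
    have := key v
    rw [hTv]
    simp [Complex.sub_im, hAim]
    linarith
  -- norm lower bound
  have hbound : ∀ v : H, m * ‖v‖ ≤ ‖T v‖ := by
    intro v
    rcases eq_or_ne v 0 with rfl | hv
    · simp
    · have h1 : m * ‖v‖ ^ 2 ≤ |((inner ℂ v (T v) : ℂ)).im| := by
        have := hquad v
        have : -( |((inner ℂ v (T v) : ℂ)).im| ) ≤ -(m * ‖v‖ ^ 2) := le_trans (neg_abs_le _) this
        linarith
      have h2 : |((inner ℂ v (T v) : ℂ)).im| ≤ ‖(inner ℂ v (T v) : ℂ)‖ := by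
        simpa using Complex.abs_im_le_norm (inner ℂ v (T v) : ℂ)
      have h3 : ‖(inner ℂ v (T v) : ℂ)‖ ≤ ‖v‖ * ‖T v‖ := norm_inner_le_norm v (T v)
      have hv' : 0 < ‖v‖ := norm_pos_iff.mpr hv
      have : m * ‖v‖ ^ 2 ≤ ‖v‖ * ‖T v‖ := by linarith
      nlinarith
  have hker : T.ker = ⊥ := by
    rw [LinearMap.ker_eq_bot']
    intro v hv
    have := hbound v
    rw [show T v = 0 from hv] at this
    simp at this
    have : ‖v‖ ≤ 0 := by nlinarith
    simpa using le_antisymm this (norm_nonneg v)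
  -- closed range
  have hanti : AntilipschitzWith (⟨m, hm0.le⟩ : NNReal)⁻¹ T := by
    apply ContinuousLinearMap.antilipschitz_of_bound
    intro x
    have h := hbound x
    have hc : (((⟨m, hm0.le⟩ : NNReal)⁻¹ : NNReal) : ℝ) = m⁻¹ := by
      exact NNReal.coe_inv _
    rw [hc]
    calc ‖x‖ = m⁻¹ * (m * ‖x‖) := by field_simp
      _ ≤ m⁻¹ * ‖T x‖ := mul_le_mul_of_nonneg_left h (by positivity)
  have hclosed : IsClosed (T.range : Set H) := by
    have : (T.range : Set H) = Set.range T := by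
      ext x; simp [LinearMap.mem_range]
    rw [this]
    exact hanti.isClosed_range T.uniformContinuous
  haveI : CompleteSpace (T.range : Submodule ℂ H) := hclosed.completeSpace_coe
  have hrange : T.range = ⊤ := by
    rw [← Submodule.orthogonal_eq_bot_iff]
    rw [Submodule.eq_bot_iff]
    intro w hw
    have h0 : (inner ℂ (T w) w : ℂ) = 0 :=
      (Submodule.mem_orthogonal _ w).mp hw (T w) (LinearMap.mem_range_self _ w)
    have h0' : (inner ℂ w (T w) : ℂ) = 0 := by
      rw [← inner_conj_symm, h0, map_zero]
    have := hquad w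
    rw [h0'] at this
    simp at this
    have : ‖w‖ ^ 2 ≤ 0 := by nlinarith
    have : ‖w‖ = 0 := by nlinarith [norm_nonneg w, sq_nonneg ‖w‖]
    simpa using this
  set e := ContinuousLinearEquiv.ofBijective T hker hrange with he
  have heT : ∀ x, T (e.symm x) = x := fun x =>
    ContinuousLinearEquiv.ofBijective_apply_symm_apply T hker hrange x
  have heT' : ∀ x, e.symm (T x) = x := fun x =>
    ContinuousLinearEquiv.ofBijective_symm_apply_apply T hker hrange x
  have hunit : IsUnit T := by
    refine ⟨⟨T, (e.symm : H →L[ℂ] H), ?_, ?_⟩, rfl⟩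
    · ext x; exact heT x
    · ext x; exact heT' x
  refine ⟨hunit, ?_⟩
  -- Part 3
  set β := e.symm α with hβ
  have hTβ : T β = α := heT α
  have hinv : Ring.inverse T α = β := by
    conv_lhs => rw [← hTβ]
    have : Ring.inverse T (T β) = (Ring.inverse T * T) β := rfl
    rw [this, Ring.inverse_mul_cancel _ hunit]
    rfl
  show 0 ≤ ((inner ℂ α ((Ring.inverse T) α) : ℂ)).im
  rw [hinv, ← hTβ]
  have hconj : (inner ℂ (T β) β : ℂ) = (starRingEnd ℂ) (inner ℂ β (T β) : ℂ) :=
    (inner_conj_symm _ _).symm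
  rw [hconj]
  rw [Complex.conj_im]
  have := hquad β
  nlinarith [norm_nonneg β, sq_nonneg ‖β‖]
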